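/- arXiv:1702.07930 — 3 statements merged into one kernel-verified Lean document; each statement's English description precedes it below -/
import Mathlib

section
/- For any ψ ∈ ℂ^p and x ∈ ℝ^p, the subdifferential at x of the convex function χ ↦ |ψ^H χ| on ℝ^p equals {Re(g ψ) : g ∈ ℂ, |g| ≤ 1, and g = (ψ^H x)/|ψ^H x| if ψ^H x ≠ 0}; i.e., a vector v ∈ ℝ^p is a subgradient if and only if v = Re(g ψ) for such a scalar g. -/
open Matrix
open scoped RealInnerProductSpace ENNReal

noncomputable section

def cnorm1 {n : ℕ} (z : Fin n → ℂ) : ℝ := ∑ j, ‖z j‖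

noncomputable def cnormInf {n : ℕ} (z : Fin n → ℂ) : ℝ := ⨆ j, ‖z j‖

def psiH {p p' : ℕ} (Ψ : Matrix (Fin p) (Fin p') ℂ) (x : EuclideanSpace ℝ (Fin p)) :
    Fin p' → ℂ :=
  Matrix.mulVec Ψᴴ fun i => (x i : ℂ)

def rePsi {p p' : ℕ} (Ψ : Matrix (Fin p) (Fin p') ℂ) (w : Fin p' → ℂ) :
    EuclideanSpace ℝ (Fin p) :=
  WithLp.toLp 2 (fun i => (Matrix.mulVec Ψ w i).re)

def Gset {n : ℕ} (s : Fin n → ℂ) : Set (Fin n → ℂ) :=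
  {w | ∀ j, ‖w j‖ ≤ 1 ∧ (s j ≠ 0 → w j = s j / (‖s j‖ : ℂ))}

def normalCone {p : ℕ} (C : Set (EuclideanSpace ℝ (Fin p))) (x : EuclideanSpace ℝ (Fin p)) :
    Set (EuclideanSpace ℝ (Fin p)) :=
  {a | ∀ y ∈ C, ⟪a, y - x⟫ ≤ 0}

def XuSet {p p' : ℕ} (C : Set (EuclideanSpace ℝ (Fin p))) (L : EuclideanSpace ℝ (Fin p) → ℝ)
    (Ψ : Matrix (Fin p) (Fin p') ℂ) (u : ℝ) : Set (EuclideanSpace ℝ (Fin p)) :=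
  {x ∈ C | ∀ χ ∈ C, L x + u * cnorm1 (psiH Ψ x) ≤ L χ + u * cnorm1 (psiH Ψ χ)}

def QSet {p p' : ℕ} (C : Set (EuclideanSpace ℝ (Fin p))) (Ψ : Matrix (Fin p) (Fin p') ℂ) :
    Set (EuclideanSpace ℝ (Fin p)) :=
  {x ∈ C | ∀ χ ∈ C, cnorm1 (psiH Ψ x) ≤ cnorm1 (psiH Ψ χ)}

def XdSet {p p' : ℕ} (C : Set (EuclideanSpace ℝ (Fin p))) (L : EuclideanSpace ℝ (Fin p) → ℝ)
    (Ψ : Matrix (Fin p) (Fin p') ℂ) : Set (EuclideanSpace ℝ (Fin p)) :=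
  {x ∈ QSet C Ψ | ∀ χ ∈ QSet C Ψ, L x ≤ L χ}

def Ubound {p p' : ℕ} (C : Set (EuclideanSpace ℝ (Fin p))) (L : EuclideanSpace ℝ (Fin p) → ℝ)
    (Ψ : Matrix (Fin p) (Fin p') ℂ) : ℝ≥0∞ :=
  sInf (ENNReal.ofReal '' {u : ℝ | 0 ≤ u ∧ (XuSet C L Ψ u ∩ QSet C Ψ).Nonempty})


/-- `ψᴴ x = ∑ i, conj ψ_i · x_i` for a real vector `x`. -/
def psiHs {p : ℕ} (ψ : Fin p → ℂ) (x : EuclideanSpace ℝ (Fin p)) : ℂ :=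
  ∑ i, starRingEnd ℂ (ψ i) * (x i : ℂ)

namespace St4Aux

lemma forced (r V R N : ℝ) (hr : 0 < r) (hN : 0 ≤ N)
    (sq : ∀ t : ℝ, 0 ≤ r + t * V → r^2 + 2*t*r*V + t^2*V^2 ≤ r^2 + 2*t*R + t^2*N) :
    r * V = R := by
  by_contra hD0
  have hDne : r * V - R ≠ 0 := sub_ne_zero.mpr hD0
  set D := r * V - R with hDdef
  set M := N + V^2 + 1 with hMdef
  have hMpos : 0 < M := by nlinarith [sq_nonneg V]
  have habs : 0 < |D| := abs_pos.mpr hDne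
  set ε := min (r / (|V| + 1)) (|D| / (2*M)) with hεdef
  have hεpos : 0 < ε := lt_min (by positivity) (by positivity)
  have hε2 : ε * (|V| + 1) ≤ r := by
    rw [← le_div_iff₀ (by positivity)]
    exact min_le_left _ _
  have hε3 : ε * (2*M) ≤ |D| := by
    rw [← le_div_iff₀ (by positivity)]
    exact min_le_right _ _
  have hp1 : 0 ≤ r + ε * V := by
    nlinarith [le_abs_self V, neg_abs_le V, abs_nonneg V]
  have hp2 : 0 ≤ r + (-ε) * V := by
    nlinarith [le_abs_self V, neg_abs_le V, abs_nonneg V]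
  have s1 := sq ε hp1
  have s2 := sq (-ε) hp2
  have key1 : 2*ε*D ≤ ε^2 * M := by nlinarith [sq_nonneg ε]
  have key2 : -(2*ε*D) ≤ ε^2 * M := by nlinarith [sq_nonneg ε]
  have key3 : ε^2 * M ≤ ε * |D| / 2 := by nlinarith [hεpos]
  rcases abs_cases D with ⟨he, hDp⟩ | ⟨he, hDn⟩
  · nlinarith [mul_pos hεpos habs]
  · nlinarith [mul_pos hεpos habs]

variable {p : ℕ} (ψ : Fin p → ℂ)

/-- `psiHs` as a real-linear map. -/
def S : EuclideanSpace ℝ (Fin p) →ₗ[ℝ] ℂ where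
  toFun y := psiHs ψ y
  map_add' y z := by
    simp [psiHs, PiLp.add_apply, mul_add, Finset.sum_add_distrib]
  map_smul' c y := by
    simp only [psiHs, PiLp.smul_apply, smul_eq_mul, Complex.ofReal_mul, RingHom.id_apply,
      Finset.smul_sum, Complex.real_smul]
    congr 1; ext i; ring

@[simp] lemma S_apply (y : EuclideanSpace ℝ (Fin p)) : S ψ y = psiHs ψ y := rfl

lemma S_single (i : Fin p) : S ψ (EuclideanSpace.single i 1) = starRingEnd ℂ (ψ i) := by
  simp only [S_apply, psiHs]
  rw [Finset.sum_eq_single i]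
  · simp
  · intro j _ hj; simp [EuclideanSpace.single_apply, hj]
  · simp

lemma adj_apply (g : ℂ) (i : Fin p) :
    LinearMap.adjoint (S ψ) g i = (g * ψ i).re := by
  have h1 : ⟪LinearMap.adjoint (S ψ) g, EuclideanSpace.single i (1:ℝ)⟫
      = ⟪g, S ψ (EuclideanSpace.single i 1)⟫ :=
    LinearMap.adjoint_inner_left (S ψ) (EuclideanSpace.single i 1) g
  rw [EuclideanSpace.inner_single_right, S_single, Complex.inner] at h1
  simp [Complex.mul_re] at h1 ⊢
  linarith

lemma inner_re (g : ℂ) (v z : EuclideanSpace ℝ (Fin p)) (hv : ∀ i, v i = (g * ψ i).re) :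
    ⟪v, z⟫ = (starRingEnd ℂ g * psiHs ψ z).re := by
  simp only [psiHs, Finset.mul_sum, Complex.re_sum, PiLp.inner_apply, RCLike.inner_apply,
    conj_trivial, hv]
  refine Finset.sum_congr rfl fun i _ => ?_
  have : starRingEnd ℂ g * (starRingEnd ℂ (ψ i) * ((z i : ℝ) : ℂ))
      = starRingEnd ℂ (g * ψ i) * ((z i : ℝ) : ℂ) := by
    rw [_root_.map_mul]; ring
  rw [this]
  simp [Complex.mul_re]
  ring

lemma re_conj_mul_le (g w : ℂ) (hg : ‖g‖ ≤ 1) :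
    (starRingEnd ℂ g * w).re ≤ ‖w‖ := by
  calc (starRingEnd ℂ g * w).re ≤ ‖starRingEnd ℂ g * w‖ := Complex.re_le_norm _
    _ = ‖g‖ * ‖w‖ := by rw [norm_mul, Complex.norm_conj]
    _ ≤ 1 * ‖w‖ := mul_le_mul_of_nonneg_right hg (norm_nonneg _)
    _ = ‖w‖ := one_mul _

end St4Aux

open St4Aux in
theorem statement_4 {p : ℕ} (hp : 0 < p) (ψ : Fin p → ℂ) (x v : EuclideanSpace ℝ (Fin p)) :
    (∀ y : EuclideanSpace ℝ (Fin p),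
        ‖psiHs ψ x‖ + ⟪v, y - x⟫ ≤ ‖psiHs ψ y‖) ↔
      ∃ g : ℂ, ‖g‖ ≤ 1 ∧
        (psiHs ψ x ≠ 0 → g = psiHs ψ x / (‖psiHs ψ x‖ : ℂ)) ∧
        v = fun i => (g * ψ i).re := by
  constructor
  · intro H
    have H' : ∀ h : EuclideanSpace ℝ (Fin p),
        ‖psiHs ψ x‖ + ⟪v, h⟫ ≤ ‖psiHs ψ x + psiHs ψ h‖ := by
      intro h
      have h1 := H (x + h)
      have h2 : (x + h) - x = h := by abel
      rw [h2] at h1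
      have h3 : psiHs ψ (x + h) = psiHs ψ x + psiHs ψ h := map_add (S ψ) x h
      rwa [h3] at h1
    by_cases hx : psiHs ψ x = 0
    · -- zero case: construct g via adjoint and orthogonal projection
      have Hle : ∀ h : EuclideanSpace ℝ (Fin p), ⟪v, h⟫ ≤ ‖psiHs ψ h‖ := by
        intro h
        have := H' h
        rw [hx] at this
        simpa using this
      have hkerv : ∀ h, psiHs ψ h = 0 → ⟪v, h⟫ = 0 := by
        intro h h0
        have h1 := Hle h
        have h2 := Hle (-h)
        have h3 : psiHs ψ (-h) = - psiHs ψ h := map_neg (S ψ) h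
        rw [h0] at h1
        rw [h3, h0, inner_neg_right] at h2
        simp only [neg_zero, map_zero, norm_zero] at h1 h2
        linarith
      have hv_mem : v ∈ (LinearMap.ker (S ψ))ᗮ := by
        rw [Submodule.mem_orthogonal]
        intro u hu
        rw [real_inner_comm]
        exact hkerv u (LinearMap.mem_ker.mp hu)
      have h1 : (LinearMap.range (LinearMap.adjoint (S ψ)))ᗮ ≤ LinearMap.ker (S ψ) := by
        intro h hh
        rw [Submodule.mem_orthogonal] at hh
        have key : ∀ g : ℂ, ⟪g, S ψ h⟫ = (0:ℝ) := by
          intro g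
          have := hh (LinearMap.adjoint (S ψ) g) (LinearMap.mem_range_self _ g)
          rwa [LinearMap.adjoint_inner_left] at this
        rw [LinearMap.mem_ker]
        exact inner_self_eq_zero.mp (key (S ψ h))
      have h2 : (LinearMap.ker (S ψ))ᗮ ≤ LinearMap.range (LinearMap.adjoint (S ψ)) := by
        calc (LinearMap.ker (S ψ))ᗮ
            ≤ (LinearMap.range (LinearMap.adjoint (S ψ)))ᗮᗮ := Submodule.orthogonal_le h1
          _ = LinearMap.range (LinearMap.adjoint (S ψ)) := Submodule.orthogonal_orthogonal _
      obtain ⟨g₀, hg₀⟩ := h2 hv_mem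
      set K : Submodule ℝ ℂ := LinearMap.range (S ψ) with hKdef
      set g : ℂ := (K.orthogonalProjectionOnto g₀ : ℂ) with hgdef
      obtain ⟨h₀, hh₀⟩ : g ∈ K := Submodule.coe_mem _
      have hperp : g₀ - g ∈ Kᗮ := Submodule.sub_starProjection_mem_orthogonal (K := K) g₀
      have hTg : LinearMap.adjoint (S ψ) g = v := by
        have hzero : ∀ h, ⟪LinearMap.adjoint (S ψ) (g₀ - g), h⟫ = (0:ℝ) := by
          intro h
          rw [LinearMap.adjoint_inner_left, real_inner_comm]
          exact ((Submodule.mem_orthogonal K _).mp hperp) (S ψ h)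
            (LinearMap.mem_range_self _ h)
        have hz : LinearMap.adjoint (S ψ) (g₀ - g) = 0 :=
          inner_self_eq_zero.mp (hzero (LinearMap.adjoint (S ψ) (g₀ - g)))
        have hsub : LinearMap.adjoint (S ψ) g₀ - LinearMap.adjoint (S ψ) g = 0 := by
          rw [← map_sub]; exact hz
        rw [hg₀] at hsub
        exact (sub_eq_zero.mp hsub).symm
      have hg1 : ‖g‖ ≤ 1 := by
        have e1 : ⟪g, S ψ h₀⟫ = ⟪v, h₀⟫ := by
          rw [← LinearMap.adjoint_inner_left, hTg]
        rw [hh₀] at e1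
        have e2 : ⟪v, h₀⟫ ≤ ‖psiHs ψ h₀‖ := Hle h₀
        have e3 : ‖psiHs ψ h₀‖ = ‖g‖ := by
          rw [show psiHs ψ h₀ = S ψ h₀ from rfl, hh₀]
        have e4 : ⟪g, g⟫ = ‖g‖ ^ 2 := by
          rw [real_inner_self_eq_norm_sq]
        nlinarith [norm_nonneg g]
      exact ⟨g, hg1, fun hne => absurd hx hne,
        funext fun i => by rw [← hTg]; exact adj_apply ψ g i⟩
    · -- nonzero case: g is forced
      have hr : 0 < ‖psiHs ψ x‖ := norm_pos_iff.mpr hx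
      refine ⟨psiHs ψ x / (‖psiHs ψ x‖ : ℂ), ?_, fun _ => rfl, ?_⟩
      · rw [norm_div, Complex.norm_of_nonneg (norm_nonneg _),
          div_self (ne_of_gt hr)]
      funext i
      have key : ∀ t : ℝ, ‖psiHs ψ x‖ + t * v i
          ≤ ‖psiHs ψ x + (t:ℂ) * starRingEnd ℂ (ψ i)‖ := by
        intro t
        have h1 := H' (t • EuclideanSpace.single i (1:ℝ))
        have h2 : psiHs ψ (t • EuclideanSpace.single i (1:ℝ))
            = (t:ℂ) * starRingEnd ℂ (ψ i) := by
          have := map_smul (S ψ) t (EuclideanSpace.single i (1:ℝ))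
          rw [S_single] at this
          rw [show psiHs ψ (t • EuclideanSpace.single i (1:ℝ))
              = S ψ (t • EuclideanSpace.single i (1:ℝ)) from rfl, this, Complex.real_smul]
        have h3 : ⟪v, t • EuclideanSpace.single i (1:ℝ)⟫ = t * v i := by
          rw [real_inner_smul_right, EuclideanSpace.inner_single_right]
          simp [mul_comm]
        rwa [h2, h3] at h1
      have sq : ∀ t : ℝ, 0 ≤ ‖psiHs ψ x‖ + t * v i →
          ‖psiHs ψ x‖ ^ 2 + 2*t*(‖psiHs ψ x‖)*(v i) + t^2*(v i)^2
            ≤ ‖psiHs ψ x‖ ^ 2 + 2*t*((psiHs ψ x) * ψ i).re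
              + t^2 * Complex.normSq (starRingEnd ℂ (ψ i)) := by
        intro t ht
        have h1 := key t
        have h2 : (‖psiHs ψ x‖ + t * v i)^2
            ≤ ‖psiHs ψ x + (t:ℂ) * starRingEnd ℂ (ψ i)‖^2 := by
          nlinarith [norm_nonneg (psiHs ψ x + (t:ℂ) * starRingEnd ℂ (ψ i))]
        have h3 : ‖psiHs ψ x + (t:ℂ) * starRingEnd ℂ (ψ i)‖^2
            = ‖psiHs ψ x‖ ^ 2 + 2*t*((psiHs ψ x) * ψ i).re
              + t^2 * Complex.normSq (starRingEnd ℂ (ψ i)) := by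
          rw [Complex.sq_norm, Complex.normSq_add]
          have e1 : Complex.normSq (psiHs ψ x) = ‖psiHs ψ x‖ ^ 2 :=
            (Complex.sq_norm _).symm
          have e2 : Complex.normSq ((t:ℂ) * starRingEnd ℂ (ψ i))
              = t^2 * Complex.normSq (starRingEnd ℂ (ψ i)) := by
            rw [_root_.map_mul, Complex.normSq_ofReal]; ring
          have e3 : ((psiHs ψ x) * starRingEnd ℂ ((t:ℂ) * starRingEnd ℂ (ψ i))).re
              = t * ((psiHs ψ x) * ψ i).re := by
            rw [_root_.map_mul, Complex.conj_ofReal, Complex.conj_conj,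
              show psiHs ψ x * ((t:ℂ) * ψ i) = (t:ℂ) * (psiHs ψ x * ψ i) by ring,
              Complex.re_ofReal_mul]
          rw [e1, e2, e3]; ring
        nlinarith [h2, h3]
      have hD : ‖psiHs ψ x‖ * v i = ((psiHs ψ x) * ψ i).re :=
        forced _ _ _ _ hr (Complex.normSq_nonneg _) sq
      have hre : (psiHs ψ x / (‖psiHs ψ x‖ : ℂ) * ψ i).re
          = (‖psiHs ψ x‖)⁻¹ * ((psiHs ψ x) * ψ i).re := by
        rw [div_mul_eq_mul_div, div_eq_inv_mul, ← Complex.ofReal_inv, Complex.re_ofReal_mul]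
      rw [hre, ← hD, inv_mul_cancel_left₀ (ne_of_gt hr)]
  · rintro ⟨g, hg1, hg2, hveq⟩ y
    have hinner : ⟪v, y - x⟫ = (starRingEnd ℂ g * psiHs ψ (y - x)).re :=
      inner_re ψ g v (y - x) (fun i => congrFun hveq i)
    have hsub : psiHs ψ (y - x) = psiHs ψ y - psiHs ψ x := map_sub (S ψ) y x
    rw [hinner, hsub, mul_sub, Complex.sub_re]
    by_cases hx : psiHs ψ x = 0
    · rw [hx]
      simp only [mul_zero, Complex.zero_re, sub_zero, map_zero, norm_zero]
      have := re_conj_mul_le g (psiHs ψ y) hg1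
      linarith
    · have hgval := hg2 hx
      have hre : (starRingEnd ℂ g * psiHs ψ x).re = ‖psiHs ψ x‖ := by
        rw [hgval, map_div₀, Complex.conj_ofReal]
        have e : starRingEnd ℂ (psiHs ψ x) / (‖psiHs ψ x‖ : ℂ) * psiHs ψ x
            = ((Complex.normSq (psiHs ψ x) : ℝ) : ℂ) / (‖psiHs ψ x‖ : ℂ) := by
          rw [div_mul_eq_mul_div, mul_comm, Complex.mul_conj]
        rw [e, ← Complex.ofReal_div, Complex.ofReal_re, ← Complex.sq_norm, pow_two,
          mul_div_assoc, div_self (norm_ne_zero_iff.mpr hx), mul_one]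
      have := re_conj_mul_le g (psiHs ψ y) hg1
      rw [hre]
      linarith
end
end

section
/- (Remark 3, sufficiency) If there exists x⋄ ∈ X⋄ such that the set ∇L(x⋄) + N_C(x⋄) is disjoint from Re(R(Ψ)) = {Re(Ψ w) : w ∈ ℂ^{p'}}, then X_u ∩ Q = ∅ for every u ≥ 0; i.e., no finite upper bound U exists (U = +∞). -/
open Matrix
open scoped RealInnerProductSpace ENNReal

noncomputable section

variable {p p' : ℕ} (Ψ : Matrix (Fin p) (Fin p') ℂ)

lemma psiH_apply (x : EuclideanSpace ℝ (Fin p)) (j : Fin p') :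
    psiH Ψ x j = ∑ i, (starRingEnd ℂ) (Ψ i j) * (x i : ℂ) := by
  simp [psiH, Matrix.mulVec, dotProduct, Matrix.conjTranspose_apply, mul_comm]

lemma psiH_line (x d : EuclideanSpace ℝ (Fin p)) (t : ℝ) (j : Fin p') :
    psiH Ψ (x + t • d) j = psiH Ψ x j + (t : ℂ) * psiH Ψ d j := by
  simp only [psiH_apply, PiLp.add_apply, PiLp.smul_apply, smul_eq_mul]
  push_cast
  rw [Finset.mul_sum, ← Finset.sum_add_distrib]
  congr 1; ext i; ring

lemma psiH_smul (d : EuclideanSpace ℝ (Fin p)) (t : ℝ) (j : Fin p') :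
    psiH Ψ (t • d) j = (t : ℂ) * psiH Ψ d j := by
  simp only [psiH_apply, PiLp.smul_apply, smul_eq_mul]
  push_cast
  rw [Finset.mul_sum]
  congr 1; ext i; ring

lemma inner_rePsi (w : Fin p' → ℂ) (d : EuclideanSpace ℝ (Fin p)) :
    ⟪rePsi Ψ w, d⟫ = ∑ j, ((starRingEnd ℂ) (w j) * psiH Ψ d j).re := by
  simp only [PiLp.inner_apply, RCLike.inner_apply, conj_trivial, rePsi, Matrix.mulVec,
    dotProduct, psiH_apply]
  have lhs : ∀ i : Fin p, (∑ j, Ψ i j * w j).re * d i = ∑ j, (Ψ i j * w j).re * d i := by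
    intro i; rw [Complex.re_sum, Finset.sum_mul]
  have rhs : ∀ j : Fin p', ((starRingEnd ℂ) (w j) * ∑ i, (starRingEnd ℂ) (Ψ i j) * ((d i : ℝ) : ℂ)).re
      = ∑ i, (Ψ i j * w j).re * d i := by
    intro j
    rw [Finset.mul_sum, Complex.re_sum]
    congr 1; ext i
    have : (starRingEnd ℂ) (w j) * ((starRingEnd ℂ) (Ψ i j) * ((d i : ℝ) : ℂ))
        = (starRingEnd ℂ) (Ψ i j * w j) * ((d i : ℝ) : ℂ) := by
      rw [_root_.map_mul]; ring
    rw [this]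
    simp [Complex.mul_re]
  simp only [mul_comm (d.ofLp _) _]
  simp only [lhs, rhs]
  rw [Finset.sum_comm]

lemma rePsi_neg_smul (w : Fin p' → ℂ) (u : ℝ) :
    rePsi Ψ (fun j => ((-u : ℝ) : ℂ) * w j) = -(u • rePsi Ψ w) := by
  ext i
  have : ∀ j, Ψ i j * (((-u : ℝ) : ℂ) * w j) = ((-u : ℝ) : ℂ) * (Ψ i j * w j) := by
    intro j; ring
  simp only [rePsi, Matrix.mulVec, dotProduct, PiLp.neg_apply, PiLp.smul_apply,
    smul_eq_mul, this, ← Finset.mul_sum]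
  simp [Complex.mul_re]

/-- directional derivative of `u`-free part: the support-like function. -/
noncomputable def mfun {p p' : ℕ} (Ψ : Matrix (Fin p) (Fin p') ℂ) (s : Fin p' → ℂ)
    (d : EuclideanSpace ℝ (Fin p)) : ℝ :=
  ∑ j, (if s j = 0 then ‖psiH Ψ d j‖
        else ((starRingEnd ℂ) (s j) * psiH Ψ d j).re / ‖s j‖)

lemma mfun_smul (s : Fin p' → ℂ) (d : EuclideanSpace ℝ (Fin p)) {t : ℝ} (ht : 0 ≤ t) :
    mfun Ψ s (t • d) = t * mfun Ψ s d := by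
  unfold mfun
  rw [Finset.mul_sum]
  congr 1; ext j
  rw [psiH_smul]
  split_ifs with h
  · rw [norm_mul]
    simp [Complex.norm_real, abs_of_nonneg ht]
  · have : (starRingEnd ℂ) (s j) * ((t : ℂ) * psiH Ψ d j)
        = (t : ℂ) * ((starRingEnd ℂ) (s j) * psiH Ψ d j) := by ring
    rw [this]
    simp [Complex.mul_re]
    ring

lemma continuous_psiH_coord (j : Fin p') : Continuous fun d : EuclideanSpace ℝ (Fin p) => psiH Ψ d j := by
  simp only [psiH_apply]
  exact continuous_finset_sum _ fun i _ => continuous_const.mul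
    (Complex.continuous_ofReal.comp (EuclideanSpace.proj (𝕜 := ℝ) i).continuous)

lemma mfun_continuous (s : Fin p' → ℂ) : Continuous (mfun Ψ s) := by
  unfold mfun
  refine continuous_finset_sum _ fun j _ => ?_
  split_ifs with h
  · exact continuous_norm.comp (continuous_psiH_coord Ψ j)
  · exact ((Complex.continuous_re.comp
      (continuous_const.mul (continuous_psiH_coord Ψ j))).div_const _)

/-- the maximizer in `Gset s` attaining `mfun`. -/
noncomputable def wstar {p p' : ℕ} (Ψ : Matrix (Fin p) (Fin p') ℂ) (s : Fin p' → ℂ)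
    (d : EuclideanSpace ℝ (Fin p)) : Fin p' → ℂ :=
  fun j => if s j = 0 then
      (if psiH Ψ d j = 0 then 0 else psiH Ψ d j / (‖psiH Ψ d j‖ : ℂ))
    else s j / (‖s j‖ : ℂ)

lemma wstar_mem (s : Fin p' → ℂ) (d : EuclideanSpace ℝ (Fin p)) : wstar Ψ s d ∈ Gset s := by
  intro j
  unfold wstar
  split_ifs with h h'
  · simp [h]
  · constructor
    · rw [norm_div]
      simp [Complex.norm_real, abs_of_nonneg (norm_nonneg _),
        div_self ((norm_ne_zero_iff.mpr h'))]
    · intro hs; exact absurd h hs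
  · constructor
    · rw [norm_div]
      simp [Complex.norm_real, abs_of_nonneg (norm_nonneg _),
        div_self ((norm_ne_zero_iff.mpr h))]
    · intro _; rfl

lemma inner_rePsi_wstar (s : Fin p' → ℂ) (d : EuclideanSpace ℝ (Fin p)) :
    ⟪rePsi Ψ (wstar Ψ s d), d⟫ = mfun Ψ s d := by
  rw [inner_rePsi]
  unfold mfun wstar
  congr 1; ext j
  set z := psiH Ψ d j with hz
  split_ifs with h h'
  · simp [h']
  · have hc : ((‖z‖ : ℝ) : ℂ) ≠ 0 := by
      simpa using (norm_ne_zero_iff.mpr h')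
    rw [map_div₀, Complex.conj_ofReal]
    have : (starRingEnd ℂ) z / ((‖z‖ : ℝ) : ℂ) * z = ((‖z‖ : ℝ) : ℂ) := by
      rw [div_mul_eq_mul_div, ← Complex.normSq_eq_conj_mul_self, Complex.normSq_eq_norm_sq]
      push_cast
      field_simp
    rw [this]
    simp
  · have hc : ‖s j‖ ≠ 0 := (norm_ne_zero_iff.mpr h)
    rw [map_div₀, Complex.conj_ofReal]
    have : (starRingEnd ℂ) (s j) / ((‖s j‖ : ℝ) : ℂ) * z
        = ((starRingEnd ℂ) (s j) * z) / ((‖s j‖ : ℝ) : ℂ) := by ring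
    rw [this, Complex.div_re]
    simp only [Complex.normSq_ofReal, Complex.ofReal_re, Complex.ofReal_im, mul_zero, zero_div,
      add_zero, sub_zero]
    field_simp

lemma hasDerivAt_abs_line {s0 z : ℂ} (hs0 : s0 ≠ 0) :
    HasDerivAt (fun t : ℝ => ‖s0 + (t : ℂ) * z‖)
      (((starRingEnd ℂ) s0 * z).re / ‖s0‖) 0 := by
  have hre : HasDerivAt (fun t : ℝ => s0.re + t * z.re) z.re 0 :=
    (hasDerivAt_mul_const z.re).const_add s0.re
  have him : HasDerivAt (fun t : ℝ => s0.im + t * z.im) z.im 0 :=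
    (hasDerivAt_mul_const z.im).const_add s0.im
  have hq : HasDerivAt (fun t : ℝ => (s0.re + t * z.re) * (s0.re + t * z.re)
      + (s0.im + t * z.im) * (s0.im + t * z.im))
      (2 * (s0.re * z.re + s0.im * z.im)) 0 := by
    have := (hre.mul hre).add (him.mul him)
    exact this.congr_deriv (by ring)
  have hq0 : (fun t : ℝ => (s0.re + t * z.re) * (s0.re + t * z.re)
      + (s0.im + t * z.im) * (s0.im + t * z.im)) 0 ≠ 0 := by
    simp only [zero_mul, add_zero]
    intro hcon
    apply hs0
    have h1 : s0.re = 0 ∧ s0.im = 0 := by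
      constructor <;> nlinarith [mul_self_nonneg s0.re, mul_self_nonneg s0.im]
    exact Complex.ext h1.1 h1.2
  have h3 := hq.sqrt hq0
  have heq : (fun t : ℝ => Real.sqrt ((s0.re + t * z.re) * (s0.re + t * z.re)
      + (s0.im + t * z.im) * (s0.im + t * z.im)))
      = fun t : ℝ => ‖s0 + (t : ℂ) * z‖ := by
    funext t
    rw [Complex.norm_def, Complex.normSq_apply]
    congr 2 <;> simp [Complex.add_re, Complex.add_im, Complex.mul_re, Complex.mul_im]
  rw [heq] at h3
  convert h3 using 1
  simp only [zero_mul, add_zero]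
  rw [show s0.re * s0.re + s0.im * s0.im = Complex.normSq s0 from (Complex.normSq_apply s0).symm]
  rw [← Complex.norm_def]
  rw [Complex.mul_re]
  simp [Complex.conj_re, Complex.conj_im]
  ring

lemma Gset_convex (s : Fin p' → ℂ) : Convex ℝ (Gset s) := by
  intro w₁ h₁ w₂ h₂ a b ha hb hab
  intro j
  obtain ⟨h₁a, h₁e⟩ := h₁ j
  obtain ⟨h₂a, h₂e⟩ := h₂ j
  constructor
  · have : (a • w₁ + b • w₂) j = (a : ℂ) * w₁ j + (b : ℂ) * w₂ j := by
      simp [Complex.real_smul]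
    rw [this]
    calc ‖(a:ℂ) * w₁ j + (b:ℂ) * w₂ j‖
        ≤ ‖(a:ℂ) * w₁ j‖ + ‖(b:ℂ) * w₂ j‖ := norm_add_le _ _
      _ = a * ‖w₁ j‖ + b * ‖w₂ j‖ := by
          rw [norm_mul, norm_mul]
          simp [Complex.norm_real, abs_of_nonneg ha, abs_of_nonneg hb]
      _ ≤ a * 1 + b * 1 := by
          gcongr
      _ = 1 := by rw [mul_one, mul_one, hab]
  · intro hs
    have : (a • w₁ + b • w₂) j = (a : ℂ) * w₁ j + (b : ℂ) * w₂ j := by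
      simp [Complex.real_smul]
    have hab' : (a:ℂ) + (b:ℂ) = 1 := by exact_mod_cast congrArg (Complex.ofReal) hab
    rw [this, h₁e hs, h₂e hs, ← add_mul, hab', one_mul]

lemma Gset_compact (s : Fin p' → ℂ) : IsCompact (Gset s) := by
  apply Metric.isCompact_of_isClosed_isBounded
  · have : Gset s = ⋂ j, ({w : Fin p' → ℂ | ‖w j‖ ≤ 1}
        ∩ {w : Fin p' → ℂ | s j ≠ 0 → w j = s j / (‖s j‖ : ℂ)}) := by
      ext w; simp [Gset, Set.mem_iInter, forall_and]
    rw [this]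
    refine isClosed_iInter fun j => IsClosed.inter ?_ ?_
    · exact isClosed_le (continuous_norm.comp (continuous_apply j)) continuous_const
    · by_cases hs : s j = 0
      · simp [hs]
      · have : {w : Fin p' → ℂ | s j ≠ 0 → w j = s j / (‖s j‖ : ℂ)}
            = {w : Fin p' → ℂ | w j = s j / (‖s j‖ : ℂ)} := by
          ext w; simp [hs]
        rw [this]
        exact isClosed_eq (continuous_apply j) continuous_const
  · apply Bornology.IsBounded.subset (Metric.isBounded_closedBall (x := (0 : Fin p' → ℂ)) (r := 1))
    intro w hw
    simp only [Metric.mem_closedBall, dist_zero_right]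
    refine pi_norm_le_iff_of_nonneg zero_le_one |>.2 fun j => ?_
    simpa using (hw j).1

lemma rePsi_continuous : Continuous fun w : Fin p' → ℂ => rePsi Ψ w := by
  have : Continuous fun w : Fin p' → ℂ => (fun i => (Matrix.mulVec Ψ w i).re : Fin p → ℝ) := by
    refine continuous_pi fun i => ?_
    refine Complex.continuous_re.comp ?_
    simp only [Matrix.mulVec, dotProduct]
    exact continuous_finset_sum _ fun j _ => continuous_const.mul (continuous_apply j)
  exact (EuclideanSpace.equiv (Fin p) ℝ).symm.continuous.comp this

lemma rePsi_add_smul (w₁ w₂ : Fin p' → ℂ) (a b : ℝ) :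
    rePsi Ψ (a • w₁ + b • w₂) = a • rePsi Ψ w₁ + b • rePsi Ψ w₂ := by
  ext i
  simp only [rePsi, Matrix.mulVec, dotProduct, PiLp.add_apply, PiLp.smul_apply,
    smul_eq_mul, Pi.add_apply, Pi.smul_apply, Complex.real_smul]
  have hj : ∀ j, Ψ i j * ((a:ℂ) * w₁ j + (b:ℂ) * w₂ j)
      = (a:ℂ) * (Ψ i j * w₁ j) + (b:ℂ) * (Ψ i j * w₂ j) := fun j => by ring
  simp only [hj, Finset.sum_add_distrib, ← Finset.mul_sum, Complex.add_re, Complex.mul_re,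
    Complex.ofReal_re, Complex.ofReal_im, zero_mul, sub_zero]

theorem statement_7 {p p' : ℕ} (hp : 0 < p) (hp' : 0 < p')
    (C : Set (EuclideanSpace ℝ (Fin p))) (hCne : C.Nonempty) (hCcl : IsClosed C)
    (hCcv : Convex ℝ C)
    (L : EuclideanSpace ℝ (Fin p) → ℝ) (hLcv : ConvexOn ℝ Set.univ L)
    (gradL : EuclideanSpace ℝ (Fin p) → EuclideanSpace ℝ (Fin p))
    (hLd : ∀ x, HasGradientAt L (gradL x) x)
    (hLb : BddBelow (L '' C))
    (Ψ : Matrix (Fin p) (Fin p') ℂ) (hXd : (XdSet C L Ψ).Nonempty)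
    (hdisj : ∃ xd ∈ XdSet C L Ψ,
      ∀ a ∈ normalCone C xd, ∀ w : Fin p' → ℂ, gradL xd + a ≠ rePsi Ψ w) :
    ∀ u : ℝ, 0 ≤ u → XuSet C L Ψ u ∩ QSet C Ψ = ∅ := by
  classical
  obtain ⟨xd, hxdXd, hdisj'⟩ := hdisj
  intro u hu
  rw [Set.eq_empty_iff_forall_notMem]
  rintro x ⟨hxXu, hxQ⟩
  obtain ⟨⟨hxdC, hxdQmin⟩, hxdLmin⟩ := hxdXd
  obtain ⟨hxC, hxopt⟩ := hxXu
  set g := gradL xd with hgdef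
  set s := psiH Ψ xd with hsdef
  -- Step 1 : xd is itself a minimizer of L + u * ‖Ψᴴ ·‖₁ over C
  have hXu : ∀ χ ∈ C, L xd + u * cnorm1 (psiH Ψ xd) ≤ L χ + u * cnorm1 (psiH Ψ χ) := by
    intro χ hχ
    have h1 : L xd ≤ L x := hxdLmin x hxQ
    have h2 : cnorm1 (psiH Ψ xd) ≤ cnorm1 (psiH Ψ x) := hxdQmin x hxQ.1
    calc L xd + u * cnorm1 (psiH Ψ xd)
        ≤ L x + u * cnorm1 (psiH Ψ x) := add_le_add h1 (mul_le_mul_of_nonneg_left h2 hu)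
      _ ≤ L χ + u * cnorm1 (psiH Ψ χ) := hxopt χ hχ
  -- Claim A : first order optimality along directions into C
  have claimA : ∀ χ ∈ C, 0 ≤ ⟪g, χ - xd⟫ + u * mfun Ψ s (χ - xd) := by
    intro χ hχ
    set d := χ - xd with hddef
    set F : ℝ → ℝ := fun t => L (xd + t • d) + u * ∑ j,
      (if s j = 0 then t * ‖psiH Ψ d j‖
       else ‖s j + (t : ℂ) * psiH Ψ d j‖) with hFdef
    have hFval : ∀ t : ℝ, 0 ≤ t →
        F t = L (xd + t • d) + u * cnorm1 (psiH Ψ (xd + t • d)) := by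
      intro t ht
      have : cnorm1 (psiH Ψ (xd + t • d)) = ∑ j,
          (if s j = 0 then t * ‖psiH Ψ d j‖
           else ‖s j + (t : ℂ) * psiH Ψ d j‖) := by
        unfold cnorm1
        refine Finset.sum_congr rfl fun j _ => ?_
        rw [psiH_line]
        split_ifs with h
        · rw [← hsdef, h, zero_add, norm_mul]
          simp [Complex.norm_real, abs_of_nonneg ht]
        · rw [← hsdef]
      rw [this]
    have hF0 : F 0 = L xd + u * cnorm1 (psiH Ψ xd) := by
      have := hFval 0 le_rfl
      simpa using this
    have hFmin : ∀ t ∈ Set.Ioc (0:ℝ) 1, F 0 ≤ F t := by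
      intro t ht
      have hmem : xd + t • d ∈ C := by
        have heq : xd + t • d = (1 - t) • xd + t • χ := by rw [hddef]; module
        rw [heq]
        exact hCcv hxdC hχ (by linarith [ht.2]) ht.1.le (by ring)
      rw [hF0, hFval t ht.1.le]
      exact hXu _ hmem
    -- derivative of F at 0
    have hγ : HasDerivAt (fun t : ℝ => xd + t • d) d 0 := by
      simpa using ((hasDerivAt_id (0:ℝ)).smul_const d).const_add xd
    have hfd := (hLd xd).hasFDerivAt
    have h0 : xd + (0:ℝ) • d = xd := by simp
    rw [← h0] at hfd
    have hLder : HasDerivAt (fun t : ℝ => L (xd + t • d)) ⟪g, d⟫ 0 := by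
      have := hfd.comp_hasDerivAt 0 hγ
      simpa [InnerProductSpace.toDual_apply_apply, hgdef, Function.comp_def] using this
    have hPder : HasDerivAt (fun t : ℝ => ∑ j,
        (if s j = 0 then t * ‖psiH Ψ d j‖
         else ‖s j + (t : ℂ) * psiH Ψ d j‖)) (mfun Ψ s d) 0 := by
      unfold mfun
      apply HasDerivAt.fun_sum
      intro j _
      by_cases hsj : s j = 0
      · simp only [hsj, if_true, eq_self_iff_true]
        simpa using hasDerivAt_mul_const (‖psiH Ψ d j‖)
      · simp only [if_neg hsj]
        exact hasDerivAt_abs_line hsj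
    have hder : HasDerivAt F (⟪g, d⟫ + u * mfun Ψ s d) 0 := hLder.add (hPder.const_mul u)
    have hslope := hasDerivAt_iff_tendsto_slope.1 hder
    have hmono : nhdsWithin (0:ℝ) (Set.Ioi 0) ≤ nhdsWithin (0:ℝ) {(0:ℝ)}ᶜ :=
      nhdsWithin_mono _ (fun t ht => ne_of_gt ht)
    refine ge_of_tendsto (hslope.mono_left hmono) ?_
    filter_upwards [Ioc_mem_nhdsGT_of_mem (Set.mem_Ico.2 ⟨le_rfl, zero_lt_one⟩)] with t ht
    rw [slope_def_field]
    have : 0 ≤ F t - F 0 := sub_nonneg.2 (hFmin t ht)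
    have ht0 : 0 ≤ t - 0 := by linarith [ht.1]
    exact div_nonneg this ht0
  -- The cone of directions
  set S : Set (EuclideanSpace ℝ (Fin p)) :=
    {e | ∃ t : ℝ, 0 ≤ t ∧ ∃ χ ∈ C, e = t • (χ - xd)} with hSdef
  have hSmem : ∀ χ ∈ C, χ - xd ∈ S := fun χ hχ => ⟨1, zero_le_one, χ, hχ, (one_smul ℝ _).symm⟩
  have hS0 : (0 : EuclideanSpace ℝ (Fin p)) ∈ S :=
    ⟨0, le_rfl, xd, hxdC, (zero_smul ℝ _).symm⟩
  let Scone : ConvexCone ℝ (EuclideanSpace ℝ (Fin p)) :=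
    { carrier := S
      smul_mem' := by
        rintro c hc e ⟨t, ht, χ, hχ, rfl⟩
        exact ⟨c * t, mul_nonneg hc.le ht, χ, hχ, smul_smul c t _⟩
      add_mem' := by
        rintro e₁ ⟨t₁, ht₁, χ₁, hχ₁, rfl⟩ e₂ ⟨t₂, ht₂, χ₂, hχ₂, rfl⟩
        by_cases h12 : t₁ + t₂ = 0
        · have ht₁0 : t₁ = 0 := by linarith
          have ht₂0 : t₂ = 0 := by linarith
          exact ⟨0, le_rfl, xd, hxdC, by simp [ht₁0, ht₂0]⟩
        · have hτ : 0 < t₁ + t₂ := lt_of_le_of_ne (by linarith) (Ne.symm h12)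
          refine ⟨t₁ + t₂, hτ.le,
            (t₁ / (t₁ + t₂)) • χ₁ + (t₂ / (t₁ + t₂)) • χ₂,
            hCcv hχ₁ hχ₂ (div_nonneg ht₁ hτ.le) (div_nonneg ht₂ hτ.le)
              (by field_simp), ?_⟩
          match_scalars <;> field_simp <;> ring }
  have hSconeS : (Scone : Set (EuclideanSpace ℝ (Fin p))) = S := rfl
  -- the dual cone
  set Dstar : Set (EuclideanSpace ℝ (Fin p)) := ↑(ProperCone.innerDual S) with hDdef
  have hDmem : ∀ b, b ∈ Dstar ↔ ∀ e ∈ S, 0 ≤ ⟪e, b⟫ := fun b => ProperCone.mem_innerDual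
  -- the compact convex set
  set KK : Set (EuclideanSpace ℝ (Fin p)) := (fun w => g + u • rePsi Ψ w) '' Gset s with hKKdef
  have key : ∃ w ∈ Gset s, g + u • rePsi Ψ w ∈ Dstar := by
    by_contra hcon
    push_neg at hcon
    have hdisjKD : Disjoint KK Dstar := by
      rw [Set.disjoint_left]
      rintro y ⟨w, hw, rfl⟩ hyD
      exact hcon w hw hyD
    have hKKcp : IsCompact KK := (Gset_compact s).image
      (continuous_const.add ((rePsi_continuous Ψ).const_smul u))
    have hKKcvx : Convex ℝ KK := by
      rintro y₁ ⟨w₁, hw₁, rfl⟩ y₂ ⟨w₂, hw₂, rfl⟩ a b ha hb hab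
      refine ⟨a • w₁ + b • w₂, Gset_convex s hw₁ hw₂ ha hb hab, ?_⟩
      show g + u • rePsi Ψ (a • w₁ + b • w₂) = a • (g + u • rePsi Ψ w₁) + b • (g + u • rePsi Ψ w₂)
      rw [rePsi_add_smul]
      match_scalars <;> simp [hab] <;> ring
    obtain ⟨f, u₀, v, hfK, huv, hfD⟩ := geometric_hahn_banach_compact_closed hKKcvx hKKcp
      ((ProperCone.innerDual S).convex) ((ProperCone.innerDual S).isClosed) hdisjKD
    have hD0 : (0 : EuclideanSpace ℝ (Fin p)) ∈ Dstar := by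
      rw [hDmem]; intro e _; rw [inner_zero_right]
    have hv0 : v < 0 := by
      have := hfD 0 hD0
      simpa using this
    have hfDnonneg : ∀ b ∈ Dstar, 0 ≤ f b := by
      intro b hb
      by_contra hneg
      push_neg at hneg
      have hcpos : 0 < v / f b := div_pos_of_neg_of_neg hv0 hneg
      have hmem : (v / f b) • b ∈ Dstar := (ProperCone.innerDual S).smul_mem hb hcpos.le
      have hlt := hfD _ hmem
      rw [_root_.map_smul, smul_eq_mul, div_mul_cancel₀ v (ne_of_lt hneg)] at hlt
      exact lt_irrefl v hlt
    -- represent f by a vector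
    set d₀ := (InnerProductSpace.toDual ℝ (EuclideanSpace ℝ (Fin p))).symm f with hd₀def
    have hd₀ : ∀ y, ⟪d₀, y⟫ = f y := fun y => InnerProductSpace.toDual_symm_apply
    -- d₀ lies in the closure of the cone S
    have hbip0 : ∃ K : ProperCone ℝ (EuclideanSpace ℝ (Fin p)),
        (K : Set (EuclideanSpace ℝ (Fin p))) = closure S :=
      let ⟨K, hK⟩ := CanLift.prf (β := ProperCone ℝ (EuclideanSpace ℝ (Fin p))) Scone.closure
        ⟨⟨0, subset_closure hS0⟩, by rw [ConvexCone.coe_closure]; exact isClosed_closure⟩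
      ⟨K, by rw [← hSconeS, ← ConvexCone.coe_closure]; exact congrArg SetLike.coe hK⟩
    obtain ⟨K, hK⟩ := hbip0
    have hbip := ProperCone.innerDual_innerDual K
    have hd₀mem : d₀ ∈ ProperCone.innerDual
        (ProperCone.innerDual (K : Set (EuclideanSpace ℝ (Fin p))) : Set (EuclideanSpace ℝ (Fin p))) := by
      rw [ProperCone.mem_innerDual]
      intro b hb
      have hbD : b ∈ Dstar := by
        rw [hDmem]
        intro e he
        exact (ProperCone.mem_innerDual).1 hb (by rw [hK]; exact subset_closure he)
      rw [real_inner_comm, hd₀]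
      exact hfDnonneg b hbD
    have hd₀clo : d₀ ∈ closure S := by
      rw [hbip] at hd₀mem
      rw [← hK]; exact hd₀mem
    -- the function P is nonneg on closure S
    set P : EuclideanSpace ℝ (Fin p) → ℝ := fun e => ⟪g, e⟫ + u * mfun Ψ s e with hPdef
    have hPS : ∀ e ∈ S, 0 ≤ P e := by
      rintro e ⟨t, ht, χ, hχ, rfl⟩
      have : P (t • (χ - xd)) = t * (⟪g, χ - xd⟫ + u * mfun Ψ s (χ - xd)) := by
        show ⟪g, t • (χ - xd)⟫ + u * mfun Ψ s (t • (χ - xd)) = _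
        rw [real_inner_smul_right, mfun_smul Ψ s _ ht]
        ring
      rw [this]
      exact mul_nonneg ht (claimA χ hχ)
    have hPcont : Continuous P :=
      (continuous_const.inner continuous_id).add (continuous_const.mul (mfun_continuous Ψ s))
    have hPd₀ : 0 ≤ P d₀ := by
      have hclosed : IsClosed {e | 0 ≤ P e} := isClosed_le continuous_const hPcont
      exact closure_minimal hPS hclosed hd₀clo
    -- final contradiction
    have hw0 : wstar Ψ s d₀ ∈ Gset s := wstar_mem Ψ s d₀
    have hfy : f (g + u • rePsi Ψ (wstar Ψ s d₀)) < u₀ := hfK _ ⟨_, hw0, rfl⟩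
    have hPeq : f (g + u • rePsi Ψ (wstar Ψ s d₀)) = P d₀ := by
      rw [← hd₀]
      show ⟪d₀, g + u • rePsi Ψ (wstar Ψ s d₀)⟫ = ⟪g, d₀⟫ + u * mfun Ψ s d₀
      have c1 : ⟪d₀, g⟫ = ⟪g, d₀⟫ := real_inner_comm _ _
      have c2 : ⟪d₀, rePsi Ψ (wstar Ψ s d₀)⟫ = ⟪rePsi Ψ (wstar Ψ s d₀), d₀⟫ :=
        real_inner_comm _ _
      rw [inner_add_right, real_inner_smul_right, c1, c2, inner_rePsi_wstar]
    rw [hPeq] at hfy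
    linarith
  -- extract the contradiction with hdisj'
  obtain ⟨w, hw, hyD⟩ := key
  have haN : -(g + u • rePsi Ψ w) ∈ normalCone C xd := by
    intro y hy
    have h0 : 0 ≤ ⟪y - xd, g + u • rePsi Ψ w⟫ := (hDmem _).1 hyD _ (hSmem y hy)
    rw [inner_neg_left, neg_nonpos, real_inner_comm]
    exact h0
  apply hdisj' _ haN (fun j => ((-u : ℝ) : ℂ) * w j)
  rw [rePsi_neg_smul]
  abel
end
end

section
/- (Corollary 1) Assume Re(R(Ψ)) = {Re(Ψ w) : w ∈ ℂ^{p'}} equals ℝ^p and there exists x̄ ∈ C with Ψ^H x̄ = 0 (so that 0 ∈ C, X⋄ = Q = {0}, and U is finite). Then U = inf { ‖t + Ψ^‡ (∇L(0) + a − Re(Ψ t))‖_∞ : a ∈ N_C(0), t ∈ ℂ^{p'} }, where Ψ^‡ = Ψ^H (Re(Ψ Ψ^H))⁻¹ (Re(Ψ Ψ^H) is invertible under the stated assumption). -/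
open Matrix
open scoped RealInnerProductSpace ENNReal
open scoped Pointwise

noncomputable section

/-- `Ψ^‡ = Ψᴴ (Re (Ψ Ψᴴ))⁻¹`. -/
def PsiDdag {p p' : ℕ} (Ψ : Matrix (Fin p) (Fin p') ℂ) : Matrix (Fin p') (Fin p) ℂ :=
  Ψᴴ * (((Ψ * Ψᴴ).map Complex.re)⁻¹.map Complex.ofReal)

namespace Aux


variable {p p' : ℕ}

lemma cnorm1_nonneg {n : ℕ} (z : Fin n → ℂ) : 0 ≤ cnorm1 z :=
  Finset.sum_nonneg fun _ _ => norm_nonneg _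

lemma cnorm1_eq_zero {n : ℕ} {z : Fin n → ℂ} (h : cnorm1 z = 0) : z = 0 := by
  funext j
  have := (Finset.sum_eq_zero_iff_of_nonneg
    (fun i _ => norm_nonneg (z i))).1 h j (Finset.mem_univ j)
  simpa using this

lemma cnorm1_neg {n : ℕ} (z : Fin n → ℂ) : cnorm1 (-z) = cnorm1 z := by
  unfold cnorm1; simp

lemma cnorm1_real_smul {n : ℕ} (c : ℝ) (z : Fin n → ℂ) :
    cnorm1 ((c : ℂ) • z) = |c| * cnorm1 z := by
  unfold cnorm1
  rw [Finset.mul_sum]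
  refine Finset.sum_congr rfl fun j _ => ?_
  simp [norm_mul, Complex.norm_real]

lemma cnormInf_nonneg {n : ℕ} (z : Fin n → ℂ) : 0 ≤ cnormInf z :=
  Real.iSup_nonneg fun j => norm_nonneg _

lemma abs_le_cnormInf {n : ℕ} (z : Fin n → ℂ) (j : Fin n) :
    ‖z j‖ ≤ cnormInf z := by
  unfold cnormInf
  exact le_ciSup (f := fun j => ‖z j‖) (Set.Finite.bddAbove (Set.finite_range _)) j

lemma cnormInf_le {n : ℕ} {z : Fin n → ℂ} {c : ℝ} (hc : 0 ≤ c)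
    (h : ∀ j, ‖z j‖ ≤ c) : cnormInf z ≤ c :=
  Real.iSup_le h hc

lemma cnormInf_zero {n : ℕ} : cnormInf (0 : Fin n → ℂ) = 0 := by
  unfold cnormInf
  simp [Real.iSup_const_zero]

lemma psiH_apply (Ψ : Matrix (Fin p) (Fin p') ℂ) (x : EuclideanSpace ℝ (Fin p)) (j : Fin p') :
    psiH Ψ x j = ∑ i, (starRingEnd ℂ) (Ψ i j) * (x i : ℂ) := by
  simp [psiH, Matrix.mulVec, dotProduct, Matrix.conjTranspose_apply]

lemma psiH_zero (Ψ : Matrix (Fin p) (Fin p') ℂ) :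
    psiH Ψ (0 : EuclideanSpace ℝ (Fin p)) = 0 := by
  funext j
  simp [psiH_apply]

lemma psiH_smul (Ψ : Matrix (Fin p) (Fin p') ℂ) (c : ℝ) (x : EuclideanSpace ℝ (Fin p)) :
    psiH Ψ (c • x) = (c : ℂ) • psiH Ψ x := by
  funext j
  simp only [psiH_apply, Pi.smul_apply, smul_eq_mul, Complex.ofReal_mul, PiLp.smul_apply]
  rw [Finset.mul_sum]
  exact Finset.sum_congr rfl fun i _ => by ring

lemma psiH_neg (Ψ : Matrix (Fin p) (Fin p') ℂ) (x : EuclideanSpace ℝ (Fin p)) :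
    psiH Ψ (-x) = -psiH Ψ x := by
  funext j
  simp only [psiH_apply, Pi.neg_apply, PiLp.neg_apply, Complex.ofReal_neg, Pi.neg_apply]
  rw [← Finset.sum_neg_distrib]
  exact Finset.sum_congr rfl fun i _ => by ring

lemma rePsi_apply (Ψ : Matrix (Fin p) (Fin p') ℂ) (v : Fin p' → ℂ) (i : Fin p) :
    rePsi Ψ v i = (∑ j, Ψ i j * v j).re := by
  simp [rePsi, Matrix.mulVec, dotProduct]

lemma rePsi_zero (Ψ : Matrix (Fin p) (Fin p') ℂ) : rePsi Ψ (0 : Fin p' → ℂ) = 0 := by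
  ext i
  simp [rePsi_apply]

lemma rePsi_add (Ψ : Matrix (Fin p) (Fin p') ℂ) (v w : Fin p' → ℂ) :
    rePsi Ψ (v + w) = rePsi Ψ v + rePsi Ψ w := by
  ext i
  simp [rePsi_apply, mul_add, Finset.sum_add_distrib, Complex.re_sum]

lemma rePsi_real_smul (Ψ : Matrix (Fin p) (Fin p') ℂ) (c : ℝ) (v : Fin p' → ℂ) :
    rePsi Ψ (c • v) = c • rePsi Ψ v := by
  ext i
  simp only [rePsi_apply, PiLp.smul_apply, Pi.smul_apply, smul_eq_mul, Complex.real_smul,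
    Complex.re_sum, Finset.mul_sum]
  refine Finset.sum_congr rfl fun j _ => ?_
  rw [mul_left_comm]
  simp [Complex.re_ofReal_mul]

lemma inner_rePsi (Ψ : Matrix (Fin p) (Fin p') ℂ) (v : Fin p' → ℂ)
    (x : EuclideanSpace ℝ (Fin p)) :
    ⟪rePsi Ψ v, x⟫ = (∑ j, v j * (starRingEnd ℂ) (psiH Ψ x j)).re := by
  rw [PiLp.inner_apply]
  simp only [RCLike.inner_apply, conj_trivial, psiH_apply, map_sum, _root_.map_mul,
    Complex.conj_conj, Complex.conj_ofReal, rePsi_apply]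
  rw [Complex.re_sum]
  have hR : ∀ j, (v j * ∑ i, Ψ i j * (x i : ℂ)).re = ∑ i, (v j * (Ψ i j * (x i : ℂ))).re := by
    intro j; rw [Finset.mul_sum, Complex.re_sum]
  simp only [hR]
  rw [Finset.sum_comm]
  refine Finset.sum_congr rfl fun i _ => ?_
  rw [Complex.re_sum, Finset.mul_sum]
  refine Finset.sum_congr rfl fun j _ => ?_
  have h : v j * (Ψ i j * (x i : ℂ)) = (x i : ℂ) * (Ψ i j * v j) := by ring
  rw [h, Complex.re_ofReal_mul]

lemma re_sum_bound {n : ℕ} (v s : Fin n → ℂ) {u : ℝ} (hu : cnormInf v ≤ u) :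
    -(u * cnorm1 s) ≤ (∑ j, v j * (starRingEnd ℂ) (s j)).re := by
  rw [Complex.re_sum, cnorm1, Finset.mul_sum, ← Finset.sum_neg_distrib]
  refine Finset.sum_le_sum fun j _ => ?_
  have h1 : |(v j * (starRingEnd ℂ) (s j)).re| ≤ ‖v j‖ * ‖s j‖ := by
    calc |(v j * (starRingEnd ℂ) (s j)).re| ≤ ‖v j * (starRingEnd ℂ) (s j)‖ :=
          Complex.abs_re_le_norm _
      _ = ‖v j‖ * ‖s j‖ := by rw [norm_mul, Complex.norm_conj]
  have h2 : ‖v j‖ ≤ u := (abs_le_cnormInf v j).trans hu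
  have h3 : (0:ℝ) ≤ ‖s j‖ := norm_nonneg _
  nlinarith [abs_le.mp h1]


section Deriv

variable {E : Type*} [NormedAddCommGroup E] [InnerProductSpace ℝ E] [CompleteSpace E]

lemma hasDerivAt_line {L : E → ℝ} {g : E} {x : E} (hg : HasGradientAt L g x) (y : E) :
    HasDerivAt (fun s : ℝ => L (x + s • y)) ⟪g, y⟫ 0 := by
  have h1 : HasDerivAt (fun s : ℝ => x + s • y) y 0 := by
    simpa using ((hasDerivAt_id (0 : ℝ)).smul_const y).const_add x
  have h2 : HasFDerivAt L (InnerProductSpace.toDual ℝ E g) ((fun s : ℝ => x + s • y) 0) := by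
    simpa using hg.hasFDerivAt
  have h3 := h2.comp_hasDerivAt 0 h1
  simp only [InnerProductSpace.toDual_apply_apply] at h3
  exact h3

lemma ge_of_slope {f : ℝ → ℝ} {d c : ℝ} (hf : HasDerivAt f d 0)
    (h : ∀ s : ℝ, 0 < s → s < 1 → c ≤ (f s - f 0) / s) : c ≤ d := by
  have ht := hasDerivAt_iff_tendsto_slope.mp hf
  have hsub : (Set.Ioi (0 : ℝ)) ⊆ {(0 : ℝ)}ᶜ := fun s hs => ne_of_gt hs
  have ht' := ht.mono_left (nhdsWithin_mono 0 hsub)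
  refine ge_of_tendsto ht' ?_
  filter_upwards [Ioo_mem_nhdsGT_of_mem (Set.left_mem_Ico.mpr one_pos)] with s hs
  have hslope : slope f 0 s = (f s - f 0) / s := by
    rw [slope_def_field, sub_zero]
  rw [hslope]
  exact h s hs.1 hs.2

lemma le_of_slope {f : ℝ → ℝ} {d c : ℝ} (hf : HasDerivAt f d 0)
    (h : ∀ s : ℝ, 0 < s → s < 1 → (f s - f 0) / s ≤ c) : d ≤ c := by
  have ht := hasDerivAt_iff_tendsto_slope.mp hf
  have hsub : (Set.Ioi (0 : ℝ)) ⊆ {(0 : ℝ)}ᶜ := fun s hs => ne_of_gt hs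
  have ht' := ht.mono_left (nhdsWithin_mono 0 hsub)
  refine le_of_tendsto ht' ?_
  filter_upwards [Ioo_mem_nhdsGT_of_mem (Set.left_mem_Ico.mpr one_pos)] with s hs
  have hslope : slope f 0 s = (f s - f 0) / s := by
    rw [slope_def_field, sub_zero]
  rw [hslope]
  exact h s hs.1 hs.2

lemma grad_ineq {L : E → ℝ} (hLcv : ConvexOn ℝ Set.univ L) {g x : E}
    (hg : HasGradientAt L g x) (χ : E) : L x + ⟪g, χ - x⟫ ≤ L χ := by
  have hline := hasDerivAt_line hg (χ - x)
  have key : ⟪g, χ - x⟫ ≤ L χ - L x := by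
    refine le_of_slope hline fun s hs hs1 => ?_
    have hxs : x + s • (χ - x) = (1 - s) • x + s • χ := by
      rw [smul_sub, sub_smul, one_smul]; abel
    have hx0 : x + (0 : ℝ) • (χ - x) = x := by simp
    have hconv := hLcv.2 (Set.mem_univ x) (Set.mem_univ χ)
      (by linarith : (0:ℝ) ≤ 1 - s) hs.le (by ring : (1 - s) + s = 1)
    simp only [smul_eq_mul] at hconv
    rw [div_le_iff₀ hs]
    simp only [hx0, hxs]
    nlinarith [hconv]
  linarith

end Deriv
end Aux

namespace Aux

variable {p p' : ℕ}

lemma zero_mem_normalCone (C : Set (EuclideanSpace ℝ (Fin p))) (x : EuclideanSpace ℝ (Fin p)) :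
    (0 : EuclideanSpace ℝ (Fin p)) ∈ normalCone C x := by
  intro y _
  simp

lemma normalCone_smul_mem {C : Set (EuclideanSpace ℝ (Fin p))} {x a : EuclideanSpace ℝ (Fin p)}
    (ha : a ∈ normalCone C x) {c : ℝ} (hc : 0 ≤ c) : c • a ∈ normalCone C x := by
  intro y hy
  rw [real_inner_smul_left]
  exact mul_nonpos_of_nonneg_of_nonpos hc (ha y hy)

lemma isClosed_normalCone (C : Set (EuclideanSpace ℝ (Fin p))) (x : EuclideanSpace ℝ (Fin p)) :
    IsClosed (normalCone C x) := by
  have : normalCone C x = ⋂ y ∈ C, {a : EuclideanSpace ℝ (Fin p) | ⟪a, y - x⟫ ≤ 0} := by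
    ext a; simp [normalCone]
  rw [this]
  refine isClosed_biInter fun y _ => ?_
  exact isClosed_le (Continuous.inner continuous_id continuous_const) continuous_const

lemma convex_normalCone (C : Set (EuclideanSpace ℝ (Fin p))) (x : EuclideanSpace ℝ (Fin p)) :
    Convex ℝ (normalCone C x) := by
  intro a ha b hb s t hs ht _
  intro y hy
  rw [inner_add_left, real_inner_smul_left, real_inner_smul_left]
  have h1 := ha y hy
  have h2 := hb y hy
  nlinarith

lemma continuous_rePsi (Ψ : Matrix (Fin p) (Fin p') ℂ) :
    Continuous fun v : Fin p' → ℂ => rePsi Ψ v := by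
  refine (PiLp.continuous_toLp 2 _).comp
    (f := fun v : Fin p' → ℂ => fun i => (∑ j, Ψ i j * v j).re) ?_
  apply continuous_pi
  intro i
  exact Complex.continuous_re.comp (continuous_finset_sum _ fun j _ =>
    continuous_const.mul (continuous_apply j))

lemma continuous_cnorm1_psiH (Ψ : Matrix (Fin p) (Fin p') ℂ) :
    Continuous fun x : EuclideanSpace ℝ (Fin p) => cnorm1 (psiH Ψ x) := by
  unfold cnorm1
  refine continuous_finset_sum _ fun j _ => ?_
  have : (fun x : EuclideanSpace ℝ (Fin p) => ‖psiH Ψ x j‖)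
      = fun x : EuclideanSpace ℝ (Fin p) =>
          ‖∑ i, (starRingEnd ℂ) (Ψ i j) * (x i : ℂ)‖ := by
    funext x; rw [psiH_apply]
  rw [this]
  exact continuous_norm.comp (continuous_finset_sum _ fun i _ =>
    continuous_const.mul (Complex.continuous_ofReal.comp ((continuous_apply i).comp (PiLp.continuous_ofLp 2 _))))

section Sep

variable {p p' : ℕ}

/-- membership in the closed cone generated by `C` from the dual condition. -/
lemma mem_closure_toCone {C : Set (EuclideanSpace ℝ (Fin p))} (hCcv : Convex ℝ C)
    (h0 : (0 : EuclideanSpace ℝ (Fin p)) ∈ C) {e : EuclideanSpace ℝ (Fin p)}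
    (he : ∀ n ∈ normalCone C 0, ⟪n, e⟫ ≤ 0) :
    e ∈ closure ((hCcv.toCone C : Set (EuclideanSpace ℝ (Fin p)))) := by
  set K := (hCcv.toCone C).closure with hK
  have hKset : (K : Set (EuclideanSpace ℝ (Fin p))) = closure (hCcv.toCone C) :=
    ConvexCone.coe_closure _
  have hne : (K : Set (EuclideanSpace ℝ (Fin p))).Nonempty := by
    refine ⟨0, ?_⟩
    rw [hKset]
    exact subset_closure (hCcv.subset_toCone h0)
  have hcl : IsClosed (K : Set (EuclideanSpace ℝ (Fin p))) := by
    rw [hKset]; exact isClosed_closure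
  by_contra hnot
  rw [← hKset] at hnot
  obtain ⟨f, b, hfK, hbe⟩ := geometric_hahn_banach_closed_point K.convex hcl hnot
  have h0K : (0 : EuclideanSpace ℝ (Fin p)) ∈ (K : Set (EuclideanSpace ℝ (Fin p))) := by
    rw [hKset]; exact subset_closure (hCcv.subset_toCone h0)
  have hb0 : 0 < b := by simpa using hfK 0 h0K
  have hfle : ∀ y ∈ (K : Set (EuclideanSpace ℝ (Fin p))), f y ≤ 0 := by
    intro y hy
    by_contra hpos
    push_neg at hpos
    have hc : 0 < b / f y := div_pos hb0 hpos
    have hlt := hfK _ (K.smul_mem hc hy)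
    rw [map_smul, smul_eq_mul, div_mul_cancel₀ _ hpos.ne'] at hlt
    exact lt_irrefl _ hlt
  set d := (InnerProductSpace.toDual ℝ (EuclideanSpace ℝ (Fin p))).symm f with hd
  have hdf : ∀ x, ⟪d, x⟫ = f x := fun x => InnerProductSpace.toDual_symm_apply
  have hdN : d ∈ normalCone C 0 := by
    intro y hy
    rw [sub_zero, hdf]
    apply hfle
    rw [hKset]; exact subset_closure (hCcv.subset_toCone hy)
  have hde := he d hdN
  rw [hdf] at hde
  linarith

/-- The key separation result. -/
lemma exists_decomp {C : Set (EuclideanSpace ℝ (Fin p))} (hCcv : Convex ℝ C)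
    (h0C : (0 : EuclideanSpace ℝ (Fin p)) ∈ C)
    (Ψ : Matrix (Fin p) (Fin p') ℂ) (g : EuclideanSpace ℝ (Fin p)) {u : ℝ} (hu : 0 ≤ u)
    (hX : ∀ y ∈ C, 0 ≤ ⟪g, y⟫ + u * cnorm1 (psiH Ψ y)) :
    ∃ a ∈ normalCone C 0, ∃ v : Fin p' → ℂ, cnormInf v ≤ u ∧ rePsi Ψ v = g + a := by
  by_contra hcon
  push_neg at hcon
  set V : Set (Fin p' → ℂ) := {v | ∀ j, ‖v j‖ ≤ u} with hV
  set K : Set (EuclideanSpace ℝ (Fin p)) := rePsi Ψ '' V with hKdef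
  set N : Set (EuclideanSpace ℝ (Fin p)) := normalCone C 0 with hN
  set A : Set (EuclideanSpace ℝ (Fin p)) := K + (-N) with hA
  -- V is compact and convex
  have hVpi : V = Set.pi Set.univ (fun _ : Fin p' => Metric.closedBall (0 : ℂ) u) := by
    ext v
    simp [hV, Set.mem_pi, Metric.mem_closedBall, Complex.dist_eq, dist_zero_right]
  have hVcomp : IsCompact V := by
    rw [hVpi]; exact isCompact_univ_pi fun _ => isCompact_closedBall _ _
  have hVconv : Convex ℝ V := by
    rw [hVpi]; exact convex_pi fun _ _ => convex_closedBall _ _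
  have hKcomp : IsCompact K := hVcomp.image (continuous_rePsi Ψ)
  have hKconv : Convex ℝ K := by
    intro x hx y hy s t hs ht hst
    obtain ⟨v, hv, rfl⟩ := hx
    obtain ⟨w, hw, rfl⟩ := hy
    refine ⟨s • v + t • w, hVconv hv hw hs ht hst, ?_⟩
    rw [rePsi_add, rePsi_real_smul, rePsi_real_smul]
  have hAclosed : IsClosed A := by
    rw [hA]
    exact IsClosed.add_left_of_isCompact ((isClosed_normalCone C 0).neg) hKcomp
  have hAconv : Convex ℝ A := Convex.add hKconv ((convex_normalCone C 0).neg)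
  have hgA : g ∉ A := by
    rintro ⟨k, hk, na, hna, rfl⟩
    obtain ⟨v, hv, rfl⟩ := hk
    rw [Set.mem_neg] at hna
    exact hcon (-na) hna v (cnormInf_le hu hv) (add_neg_cancel_right _ _).symm
  obtain ⟨f, b, hfA, hbg⟩ := geometric_hahn_banach_closed_point hAconv hAclosed hgA
  set d := (InnerProductSpace.toDual ℝ (EuclideanSpace ℝ (Fin p))).symm f with hd
  have hdf : ∀ x, ⟪d, x⟫ = f x := fun x => InnerProductSpace.toDual_symm_apply
  -- 0 ∈ A
  have h0V : (0 : Fin p' → ℂ) ∈ V := fun j => by simpa using hu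
  have h0K : (0 : EuclideanSpace ℝ (Fin p)) ∈ K := ⟨0, h0V, rePsi_zero Ψ⟩
  have h0N : (0 : EuclideanSpace ℝ (Fin p)) ∈ N := zero_mem_normalCone C 0
  have h0A : (0 : EuclideanSpace ℝ (Fin p)) ∈ A :=
    ⟨0, h0K, 0, by simpa using h0N, by simp⟩
  have hb0 : 0 < b := by
    have := hfA 0 h0A
    simpa using this
  -- f is nonneg on N
  have hfN : ∀ n ∈ N, 0 ≤ f n := by
    intro n hn
    by_contra hneg
    push_neg at hneg
    set c : ℝ := (b + 1) / (-f n) with hc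
    have hfn : 0 < -f n := by linarith
    have hcpos : 0 < c := div_pos (by linarith) hfn
    have hmem : (0 : EuclideanSpace ℝ (Fin p)) + -(c • n) ∈ A :=
      ⟨0, h0K, -(c • n), Set.neg_mem_neg.mpr (normalCone_smul_mem hn hcpos.le), rfl⟩
    have hlt := hfA _ hmem
    rw [zero_add] at hlt
    simp only [map_neg, _root_.map_smul, smul_eq_mul] at hlt
    have hcalc : -(c * f n) = b + 1 := by
      have hfn' : f n ≠ 0 := ne_of_lt hneg
      rw [hc]
      field_simp
    rw [hcalc] at hlt
    linarith
  -- the direction e := -d lies in the closed cone of C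
  have heT : -d ∈ closure ((hCcv.toCone C : Set (EuclideanSpace ℝ (Fin p)))) := by
    refine mem_closure_toCone hCcv h0C ?_
    intro n hn
    rw [inner_neg_right, real_inner_comm, hdf]
    have := hfN n hn
    linarith
  -- φ is nonneg on the closed cone
  set φ : EuclideanSpace ℝ (Fin p) → ℝ := fun x => ⟪g, x⟫ + u * cnorm1 (psiH Ψ x) with hφ
  have hφcont : Continuous φ := by
    refine Continuous.add ?_ ?_
    · exact Continuous.inner continuous_const continuous_id
    · exact continuous_const.mul (continuous_cnorm1_psiH Ψ)
  have hφcone : ∀ z ∈ (hCcv.toCone C : Set (EuclideanSpace ℝ (Fin p))), 0 ≤ φ z := by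
    intro z hz
    rw [SetLike.mem_coe, hCcv.mem_toCone] at hz
    obtain ⟨c, hcpos, y, hyC, rfl⟩ := hz
    have : φ (c • y) = c * φ y := by
      rw [hφ]
      simp only [real_inner_smul_right, psiH_smul, cnorm1_real_smul, abs_of_pos hcpos]
      ring
    rw [this]
    exact mul_nonneg hcpos.le (hX y hyC)
  have hφe : 0 ≤ φ (-d) := by
    have hsub : closure ((hCcv.toCone C : Set (EuclideanSpace ℝ (Fin p))))
        ⊆ {x | 0 ≤ φ x} :=
      closure_minimal hφcone (isClosed_le continuous_const hφcont)
    exact hsub heT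
  -- upper bound on u * cnorm1 (psiH Ψ d)
  set sv : Fin p' → ℂ := psiH Ψ d with hsv
  set vstar : Fin p' → ℂ := fun j =>
    if h : sv j = 0 then 0 else (u : ℂ) * (sv j / (‖sv j‖ : ℂ)) with hvstar
  have hvV : vstar ∈ V := by
    intro j
    rw [hvstar]
    by_cases h : sv j = 0
    · simp [h, hu]
    · simp only [h, dif_neg, not_false_iff]
      have h1 : ‖(u : ℂ) * (sv j / (‖sv j‖ : ℂ))‖ = u := by
        rw [norm_mul, norm_div, Complex.norm_real, Complex.norm_real,
          Real.norm_of_nonneg hu, Real.norm_of_nonneg (norm_nonneg _),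
          div_self (norm_ne_zero_iff.mpr h), mul_one]
      rw [h1]
  have hsum : (∑ j, vstar j * (starRingEnd ℂ) (sv j)).re = u * cnorm1 sv := by
    rw [Complex.re_sum, cnorm1, Finset.mul_sum]
    refine Finset.sum_congr rfl fun j _ => ?_
    by_cases h : sv j = 0
    · simp [hvstar, h]
    · have habs : (0 : ℝ) < ‖sv j‖ := norm_pos_iff.mpr h
      have hne : ((‖sv j‖ : ℝ) : ℂ) ≠ 0 := by
        exact_mod_cast norm_ne_zero_iff.mpr h
      have heq : vstar j * (starRingEnd ℂ) (sv j)
          = ((u * ‖sv j‖ : ℝ) : ℂ) := by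
        rw [hvstar]
        simp only [h, dif_neg, not_false_iff]
        rw [mul_assoc, div_mul_eq_mul_div, Complex.mul_conj, Complex.normSq_eq_norm_sq]
        push_cast
        field_simp
      rw [heq]
      simp
  have hKbound : u * cnorm1 sv < b := by
    have hmem : rePsi Ψ vstar + -(0 : EuclideanSpace ℝ (Fin p)) ∈ A :=
      ⟨rePsi Ψ vstar, ⟨vstar, hvV, rfl⟩, -0, by simpa using h0N, rfl⟩
    have hlt := hfA _ hmem
    rw [neg_zero, add_zero, ← hdf] at hlt
    rw [real_inner_comm, inner_rePsi] at hlt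
    rw [← hsv, hsum] at hlt
    exact hlt
  have hgd : b < ⟪g, d⟫ := by
    rw [← hdf] at hbg
    rw [real_inner_comm] at hbg
    exact hbg
  -- contradiction with hφe
  have : φ (-d) < 0 := by
    rw [hφ]
    simp only [inner_neg_right, psiH_neg, cnorm1_neg]
    rw [← hsv]
    linarith
  linarith

end Sep

section Main

variable {p p' : ℕ}

lemma psiH_eq_zero {Ψ : Matrix (Fin p) (Fin p') ℂ}
    (hsurj : ∀ v : EuclideanSpace ℝ (Fin p), ∃ w : Fin p' → ℂ, rePsi Ψ w = v)
    {x : EuclideanSpace ℝ (Fin p)} (hx : psiH Ψ x = 0) : x = 0 := by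
  obtain ⟨w, hw⟩ := hsurj x
  have h : ⟪rePsi Ψ w, x⟫ = 0 := by
    rw [inner_rePsi, hx]
    simp
  rw [hw] at h
  exact inner_self_eq_zero.mp h

lemma rePsi_psiH (Ψ : Matrix (Fin p) (Fin p') ℂ) (x : EuclideanSpace ℝ (Fin p)) (i : Fin p) :
    rePsi Ψ (psiH Ψ x) i = ((Ψ * Ψᴴ).map Complex.re).mulVec (fun k => x k) i := by
  rw [rePsi_apply]
  simp only [Matrix.mulVec, dotProduct, Matrix.map_apply, Matrix.mul_apply,
    Matrix.conjTranspose_apply, psiH_apply]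
  rw [Complex.re_sum]
  have hL : ∀ j, (Ψ i j * ∑ k, (starRingEnd ℂ) (Ψ k j) * (x k : ℂ)).re
      = ∑ k, (Ψ i j * ((starRingEnd ℂ) (Ψ k j) * (x k : ℂ))).re := by
    intro j; rw [Finset.mul_sum, Complex.re_sum]
  simp only [hL]
  rw [Finset.sum_comm]
  refine Finset.sum_congr rfl fun k _ => ?_
  rw [Complex.re_sum, Finset.sum_mul]
  refine Finset.sum_congr rfl fun j _ => ?_
  have h : Ψ i j * ((starRingEnd ℂ) (Ψ k j) * (x k : ℂ))
      = (x k : ℂ) * (Ψ i j * (starRingEnd ℂ) (Ψ k j)) := by ring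
  rw [h, Complex.re_ofReal_mul]
  rw [show star (Ψ k j) = (starRingEnd ℂ) (Ψ k j) from rfl]
  ring

lemma inner_rePsi_psiH (Ψ : Matrix (Fin p) (Fin p') ℂ) (x : EuclideanSpace ℝ (Fin p)) :
    ⟪rePsi Ψ (psiH Ψ x), x⟫ = ∑ j, (‖psiH Ψ x j‖) ^ 2 := by
  rw [inner_rePsi, Complex.re_sum]
  refine Finset.sum_congr rfl fun j _ => ?_
  rw [Complex.mul_conj, Complex.ofReal_re, Complex.normSq_eq_norm_sq]

lemma det_unit {Ψ : Matrix (Fin p) (Fin p') ℂ}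
    (hsurj : ∀ v : EuclideanSpace ℝ (Fin p), ∃ w : Fin p' → ℂ, rePsi Ψ w = v) :
    IsUnit ((Ψ * Ψᴴ).map Complex.re).det := by
  rw [isUnit_iff_ne_zero]
  intro hdet
  obtain ⟨x, hx0, hMx⟩ := Matrix.exists_mulVec_eq_zero_iff.mpr hdet
  set X : EuclideanSpace ℝ (Fin p) := WithLp.toLp 2 x with hXdef
  have h1 : rePsi Ψ (psiH Ψ X) = 0 := by
    ext i
    rw [rePsi_psiH]
    have h2 : ((Ψ * Ψᴴ).map Complex.re).mulVec (fun k => X k) = 0 := hMx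
    simp [h2]
  have h3 : (0 : ℝ) = ∑ j, (‖psiH Ψ X j‖) ^ 2 := by
    rw [← inner_rePsi_psiH, h1, inner_zero_left]
  have h4 : psiH Ψ X = 0 := by
    funext j
    have := (Finset.sum_eq_zero_iff_of_nonneg
      (fun j _ => sq_nonneg (‖psiH Ψ X j‖))).1 h3.symm j (Finset.mem_univ j)
    have h5 : ‖psiH Ψ X j‖ = 0 := by
      nlinarith [norm_nonneg (psiH Ψ X j)]
    simpa using h5
  exact hx0 (by simpa [hXdef] using congrArg WithLp.ofLp (psiH_eq_zero hsurj h4))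

lemma rePsi_PsiDdag {Ψ : Matrix (Fin p) (Fin p') ℂ}
    (hdet : IsUnit ((Ψ * Ψᴴ).map Complex.re).det) (y : EuclideanSpace ℝ (Fin p)) :
    rePsi Ψ ((PsiDdag Ψ).mulVec fun i => (y i : ℂ)) = y := by
  set M := (Ψ * Ψᴴ).map Complex.re with hM
  set z : Fin p → ℝ := M⁻¹.mulVec (fun i => y i) with hz
  set Z : EuclideanSpace ℝ (Fin p) := WithLp.toLp 2 z with hZ
  have h1 : (PsiDdag Ψ).mulVec (fun i => (y i : ℂ)) = psiH Ψ Z := by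
    rw [PsiDdag, ← Matrix.mulVec_mulVec]
    rw [psiH]
    congr 1
    funext i
    simp only [Matrix.mulVec, dotProduct, Matrix.map_apply]
    rw [hZ, hz]
    simp only [Matrix.mulVec, dotProduct, WithLp.ofLp_toLp]
    push_cast
    rfl
  rw [h1]
  ext i
  rw [rePsi_psiH]
  show (M.mulVec (M⁻¹.mulVec fun k => y k)) i = y i
  rw [Matrix.mulVec_mulVec, Matrix.mul_nonsing_inv _ hdet, Matrix.one_mulVec]

lemma cnorm1_zero {n : ℕ} : cnorm1 (0 : Fin n → ℂ) = 0 := by simp [cnorm1]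

lemma zero_mem_Xu {C : Set (EuclideanSpace ℝ (Fin p))} (h0C : (0 : EuclideanSpace ℝ (Fin p)) ∈ C)
    {L : EuclideanSpace ℝ (Fin p) → ℝ} (hLcv : ConvexOn ℝ Set.univ L)
    {g : EuclideanSpace ℝ (Fin p)} (hg : HasGradientAt L g 0)
    {Ψ : Matrix (Fin p) (Fin p') ℂ} {u : ℝ} (hu : 0 ≤ u)
    {a : EuclideanSpace ℝ (Fin p)} (ha : a ∈ normalCone C 0)
    {v : Fin p' → ℂ} (hv : cnormInf v ≤ u) (heq : rePsi Ψ v = g + a) :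
    (0 : EuclideanSpace ℝ (Fin p)) ∈ XuSet C L Ψ u := by
  refine ⟨h0C, fun χ hχ => ?_⟩
  have h1 : L 0 + ⟪g, χ - 0⟫ ≤ L χ := grad_ineq hLcv hg χ
  rw [sub_zero] at h1
  have h2 : ⟪a, χ⟫ ≤ 0 := by have := ha χ hχ; rwa [sub_zero] at this
  have h3 : ⟪rePsi Ψ v, χ⟫ = ⟪g, χ⟫ + ⟪a, χ⟫ := by rw [heq, inner_add_left]
  have h4 : -(u * cnorm1 (psiH Ψ χ)) ≤ ⟪rePsi Ψ v, χ⟫ := by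
    rw [inner_rePsi]; exact re_sum_bound v _ hv
  rw [psiH_zero, cnorm1_zero]
  linarith

lemma dirDeriv {C : Set (EuclideanSpace ℝ (Fin p))} (hCcv : Convex ℝ C)
    {L : EuclideanSpace ℝ (Fin p) → ℝ} {g : EuclideanSpace ℝ (Fin p)}
    (hg : HasGradientAt L g 0) {Ψ : Matrix (Fin p) (Fin p') ℂ} {u : ℝ} (hu : 0 ≤ u)
    (hmem : (0 : EuclideanSpace ℝ (Fin p)) ∈ XuSet C L Ψ u) :
    ∀ y ∈ C, 0 ≤ ⟪g, y⟫ + u * cnorm1 (psiH Ψ y) := by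
  intro y hy
  have h0C : (0 : EuclideanSpace ℝ (Fin p)) ∈ C := hmem.1
  have hkey : -(u * cnorm1 (psiH Ψ y)) ≤ ⟪g, y⟫ := by
    have hline := hasDerivAt_line hg y
    refine ge_of_slope hline fun s hs hs1 => ?_
    show -(u * cnorm1 (psiH Ψ y)) ≤ (L ((0 : EuclideanSpace ℝ (Fin p)) + s • y)
      - L ((0 : EuclideanSpace ℝ (Fin p)) + (0 : ℝ) • y)) / s
    have hsy : (0 : EuclideanSpace ℝ (Fin p)) + s • y = s • y := zero_add _
    have hs0 : (0 : EuclideanSpace ℝ (Fin p)) + (0 : ℝ) • y = 0 := by simp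
    rw [hsy, hs0]
    have hCm : s • y ∈ C := by
      have := hCcv hy h0C (le_of_lt hs) (by linarith : (0:ℝ) ≤ 1 - s) (by ring)
      simpa using this
    have hX := hmem.2 (s • y) hCm
    rw [psiH_zero, cnorm1_zero] at hX
    have hsm : cnorm1 (psiH Ψ (s • y)) = s * cnorm1 (psiH Ψ y) := by
      rw [psiH_smul, cnorm1_real_smul, abs_of_pos hs]
    rw [hsm] at hX
    rw [le_div_iff₀ hs]
    nlinarith
  linarith

end Main

end Aux

open Aux in
theorem statement_12 {p p' : ℕ} (hp : 0 < p) (hp' : 0 < p')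
    (C : Set (EuclideanSpace ℝ (Fin p))) (hCne : C.Nonempty) (hCcl : IsClosed C)
    (hCcv : Convex ℝ C)
    (L : EuclideanSpace ℝ (Fin p) → ℝ) (hLcv : ConvexOn ℝ Set.univ L)
    (gradL : EuclideanSpace ℝ (Fin p) → EuclideanSpace ℝ (Fin p))
    (hLd : ∀ x, HasGradientAt L (gradL x) x)
    (hLb : BddBelow (L '' C))
    (Ψ : Matrix (Fin p) (Fin p') ℂ)
    (hsurj : ∀ v : EuclideanSpace ℝ (Fin p), ∃ w : Fin p' → ℂ, rePsi Ψ w = v)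
    (hbar : ∃ x ∈ C, psiH Ψ x = 0) :
    (0 : EuclideanSpace ℝ (Fin p)) ∈ C ∧
    QSet C Ψ = {0} ∧
    XdSet C L Ψ = {0} ∧
    IsUnit ((Ψ * Ψᴴ).map Complex.re).det ∧
    Ubound C L Ψ ≠ ⊤ ∧
    Ubound C L Ψ = sInf (ENNReal.ofReal ''
      {r : ℝ | ∃ a ∈ normalCone C (0 : EuclideanSpace ℝ (Fin p)), ∃ t : Fin p' → ℂ,
        r = cnormInf (t + (PsiDdag Ψ).mulVec fun i =>
          ((gradL 0 i + a i - (Ψ.mulVec t i).re : ℝ) : ℂ))}) := by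
  obtain ⟨xbar, hxbarC, hxbar0⟩ := hbar
  have h0C : (0 : EuclideanSpace ℝ (Fin p)) ∈ C := by
    have hx0 : xbar = 0 := psiH_eq_zero hsurj hxbar0
    rwa [hx0] at hxbarC
  have hcn0 : cnorm1 (psiH Ψ (0 : EuclideanSpace ℝ (Fin p))) = 0 := by
    rw [psiH_zero, cnorm1_zero]
  have hQ : QSet C Ψ = {0} := by
    ext x
    rw [Set.mem_singleton_iff]
    constructor
    · rintro ⟨hxC, hmin⟩
      have h1 := hmin 0 h0C
      rw [hcn0] at h1
      have h2 : cnorm1 (psiH Ψ x) = 0 := le_antisymm h1 (cnorm1_nonneg _)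
      exact psiH_eq_zero hsurj (cnorm1_eq_zero h2)
    · rintro rfl
      exact ⟨h0C, fun χ _ => by rw [hcn0]; exact cnorm1_nonneg _⟩
  have hXd : XdSet C L Ψ = {0} := by
    ext x
    rw [Set.mem_singleton_iff]
    constructor
    · rintro ⟨hxQ, _⟩
      rw [hQ] at hxQ
      exact hxQ
    · rintro rfl
      refine ⟨by rw [hQ]; rfl, fun χ hχ => ?_⟩
      rw [hQ, Set.mem_singleton_iff] at hχ
      rw [hχ]
  have hdet : IsUnit ((Ψ * Ψᴴ).map Complex.re).det := det_unit hsurj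
  set g : EuclideanSpace ℝ (Fin p) := gradL 0 with hgdef
  set R' : Set ℝ := {r | ∃ a ∈ normalCone C (0 : EuclideanSpace ℝ (Fin p)),
    ∃ v : Fin p' → ℂ, rePsi Ψ v = g + a ∧ r = cnormInf v} with hR'def
  have hmemXu : ∀ u : ℝ, (XuSet C L Ψ u ∩ QSet C Ψ).Nonempty ↔
      (0 : EuclideanSpace ℝ (Fin p)) ∈ XuSet C L Ψ u := by
    intro u
    constructor
    · rintro ⟨x, hx1, hx2⟩
      rw [hQ, Set.mem_singleton_iff] at hx2
      rwa [hx2] at hx1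
    · intro h
      exact ⟨0, h, by rw [hQ]; rfl⟩
  have hR'S : ∀ r ∈ R', 0 ≤ r ∧ (XuSet C L Ψ r ∩ QSet C Ψ).Nonempty := by
    rintro r ⟨a, ha, v, hveq, rfl⟩
    refine ⟨cnormInf_nonneg v, (hmemXu _).mpr ?_⟩
    exact zero_mem_Xu h0C hLcv (hLd 0) (cnormInf_nonneg v) ha le_rfl hveq
  have hSR' : ∀ u : ℝ, 0 ≤ u → (XuSet C L Ψ u ∩ QSet C Ψ).Nonempty →
      ∃ r ∈ R', r ≤ u := by
    intro u hu hne
    have h0Xu := (hmemXu u).mp hne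
    have hdd := dirDeriv hCcv (hLd 0) hu h0Xu
    obtain ⟨a, ha, v, hvle, hveq⟩ := exists_decomp hCcv h0C Ψ g hu hdd
    exact ⟨cnormInf v, ⟨a, ha, v, hveq, rfl⟩, hvle⟩
  have hRR' : {r : ℝ | ∃ a ∈ normalCone C (0 : EuclideanSpace ℝ (Fin p)), ∃ t : Fin p' → ℂ,
      r = cnormInf (t + (PsiDdag Ψ).mulVec fun i =>
        ((g i + a i - (Ψ.mulVec t i).re : ℝ) : ℂ))} = R' := by
    ext r
    constructor
    · rintro ⟨a, ha, t, rfl⟩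
      refine ⟨a, ha, t + (PsiDdag Ψ).mulVec fun i =>
        ((g i + a i - (Ψ.mulVec t i).re : ℝ) : ℂ), ?_, rfl⟩
      rw [rePsi_add]
      have harg : (fun i => ((g i + a i - (Ψ.mulVec t i).re : ℝ) : ℂ))
          = fun i => (((g + a - rePsi Ψ t) : EuclideanSpace ℝ (Fin p)) i : ℂ) := by
        funext i
        have h2 : ((g + a - rePsi Ψ t) : EuclideanSpace ℝ (Fin p)) i
            = g i + a i - (Ψ.mulVec t i).re := by
          simp [rePsi, PiLp.add_apply, PiLp.sub_apply]
        rw [h2]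
      rw [harg, rePsi_PsiDdag hdet (g + a - rePsi Ψ t), add_comm, sub_add_cancel]
    · rintro ⟨a, ha, v, hveq, rfl⟩
      refine ⟨a, ha, v, ?_⟩
      have harg : (fun i => ((g i + a i - (Ψ.mulVec v i).re : ℝ) : ℂ))
          = (0 : Fin p → ℂ) := by
        funext i
        have h1 : (Ψ.mulVec v i).re = rePsi Ψ v i := rfl
        rw [Pi.zero_apply, h1, hveq]
        simp [PiLp.add_apply]
      rw [harg, Matrix.mulVec_zero, add_zero]
  have hUeq : Ubound C L Ψ = sInf (ENNReal.ofReal '' R') := by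
    rw [Ubound]
    apply le_antisymm
    · refine sInf_le_sInf (Set.image_mono ?_)
      intro r hr
      exact hR'S r hr
    · refine le_sInf ?_
      rintro b ⟨u, ⟨hu0, hune⟩, rfl⟩
      obtain ⟨r, hrR', hru⟩ := hSR' u hu0 hune
      exact le_trans (sInf_le ⟨r, hrR', rfl⟩) (ENNReal.ofReal_le_ofReal hru)
  have hne_top : Ubound C L Ψ ≠ ⊤ := by
    obtain ⟨v0, hv0⟩ := hsurj g
    have hr : cnormInf v0 ∈ R' :=
      ⟨0, zero_mem_normalCone C 0, v0, by rw [hv0, add_zero], rfl⟩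
    have hle : Ubound C L Ψ ≤ ENNReal.ofReal (cnormInf v0) := by
      rw [hUeq]
      exact sInf_le ⟨cnormInf v0, hr, rfl⟩
    exact ne_top_of_le_ne_top ENNReal.ofReal_ne_top hle
  exact ⟨h0C, hQ, hXd, hdet, hne_top, by rw [hUeq, hRR']⟩
end
end
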